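/- Let $b, m > 0$ and for $h > h^\#$ let $T_h \in (h/(b+1), h)$ be the larger solution of $t^2(h-t)^{2b} = m^2$ in $(0,h)$. Then $h \mapsto T_h$ is strictly increasing on $(h^\#, \infty)$. -/

import Mathlib

private lemma key_eq (b h T m : ℝ) (hm : 0 < m) (hT0 : 0 < T) (hTh : T < h)
    (he : T^2 * (h - T) ^ (2*b) = m^2) : T * (h - T) ^ b = m := by
  have hpos : 0 < h - T := by linarith
  have h2 : ((h - T) ^ b) ^ 2 = (h - T) ^ (2*b) := by
    rw [← Real.rpow_natCast ((h - T) ^ b) 2, ← Real.rpow_mul hpos.le]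
    norm_num [mul_comm]
  have hsq : (T * (h - T) ^ b) ^ 2 = m ^ 2 := by
    rw [mul_pow, h2]; exact he
  have hnn : (0:ℝ) ≤ T * (h - T) ^ b := by positivity
  calc T * (h - T) ^ b = Real.sqrt ((T * (h - T) ^ b) ^ 2) := (Real.sqrt_sq hnn).symm
    _ = Real.sqrt (m ^ 2) := by rw [hsq]
    _ = m := Real.sqrt_sq hm.le

private lemma key_anti (b h : ℝ) (hb : 0 < b) (hh : 0 < h) :
    StrictAntiOn (fun t => t * (h - t) ^ b) (Set.Icc (h/(b+1)) h) := by
  have hb1 : 0 < b + 1 := by linarith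
  apply strictAntiOn_of_deriv_neg (convex_Icc _ _)
  · apply Continuous.continuousOn
    apply continuous_id.mul
    rw [continuous_iff_continuousAt]
    intro x
    exact (continuous_const.sub continuous_id).continuousAt.rpow_const (Or.inr hb.le)
  · intro t ht
    rw [interior_Icc] at ht
    obtain ⟨ht1, ht2⟩ := ht
    have hpos : 0 < h - t := by linarith
    have hd1 : HasDerivAt (fun t : ℝ => h - t) (-1) t := by
      exact (hasDerivAt_id' t).const_sub h
    have hd2 : HasDerivAt (fun t : ℝ => (h - t) ^ b) (b * (h - t) ^ (b - 1) * (-1)) t :=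
      (Real.hasDerivAt_rpow_const (Or.inl hpos.ne')).comp t hd1
    have hd : HasDerivAt (fun t : ℝ => t * (h - t) ^ b)
        (1 * (h - t) ^ b + t * (b * (h - t) ^ (b - 1) * (-1))) t :=
      (hasDerivAt_id t).mul hd2
    rw [hd.deriv]
    have hsplit : (h - t) ^ b = (h - t) ^ (b - 1) * (h - t) := by
      rw [← Real.rpow_add_one hpos.ne']; ring_nf
    have hfac : 0 < (h - t) ^ (b - 1) := Real.rpow_pos_of_pos hpos _
    have hneg : h - (b + 1) * t < 0 := by
      have := (div_lt_iff₀ hb1).mp ht1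
      linarith
    have ht0 : 0 < t := lt_trans (by positivity) ht1
    calc 1 * (h - t) ^ b + t * (b * (h - t) ^ (b - 1) * (-1))
        = (h - t) ^ (b - 1) * (h - (b + 1) * t) := by rw [hsplit]; ring
      _ < 0 := mul_neg_of_pos_of_neg hfac hneg

/-- The map h ↦ T_h (larger solution of t²(h-t)^{2b} = m² in (h/(b+1), h))
is strictly increasing on (h^#, ∞). -/
theorem Th_strict_mono (b m h₁ h₂ T₁ T₂ : ℝ) (hb : 0 < b) (hm : 0 < m)
    (hh₁ : (b+1) / b ^ (b/(b+1)) * m ^ (1/(b+1)) < h₁) (h12 : h₁ < h₂)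
    (hT₁ : h₁/(b+1) < T₁) (hT₁' : T₁ < h₁) (he₁ : T₁^2 * (h₁ - T₁) ^ (2*b) = m^2)
    (hT₂ : h₂/(b+1) < T₂) (hT₂' : T₂ < h₂) (he₂ : T₂^2 * (h₂ - T₂) ^ (2*b) = m^2) :
    T₁ < T₂ := by
  have hb1 : (0:ℝ) < b + 1 := by linarith
  have hh₁pos : 0 < h₁ := lt_trans (by positivity) hh₁
  have hh₂pos : 0 < h₂ := by linarith
  have hT₁0 : 0 < T₁ := lt_trans (div_pos hh₁pos hb1) hT₁
  have hT₂0 : 0 < T₂ := lt_trans (div_pos hh₂pos hb1) hT₂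
  have hg₁ : T₁ * (h₁ - T₁) ^ b = m := key_eq b h₁ T₁ m hm hT₁0 hT₁' he₁
  have hg₂ : T₂ * (h₂ - T₂) ^ b = m := key_eq b h₂ T₂ m hm hT₂0 hT₂' he₂
  by_contra hcon
  push_neg at hcon
  -- T₂ ≤ T₁, and T₂ ∈ Icc (h₁/(b+1)) h₁
  have hT₂mem : T₂ ∈ Set.Icc (h₁/(b+1)) h₁ := by
    constructor
    · have : h₁ / (b+1) < h₂ / (b+1) := by gcongr
      linarith
    · linarith
  have hT₁mem : T₁ ∈ Set.Icc (h₁/(b+1)) h₁ := ⟨hT₁.le, hT₁'.le⟩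
  have hmono := key_anti b h₁ hb hh₁pos
  have hle : T₁ * (h₁ - T₁) ^ b ≤ T₂ * (h₁ - T₂) ^ b := by
    rcases eq_or_lt_of_le hcon with h | h
    · rw [h]
    · exact (hmono hT₂mem hT₁mem h).le
  have hlt : T₂ * (h₁ - T₂) ^ b < T₂ * (h₂ - T₂) ^ b := by
    apply mul_lt_mul_of_pos_left _ hT₂0
    apply Real.rpow_lt_rpow (by linarith) (by linarith) hb
  linarith
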